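/- Let f be a Fréchet-differentiable function of weights W = (w^(1), …, w^(m)) and parameters g that is positively scale-invariant in W, and suppose every block w^(i) is nonzero. Let V = (w^(1)/‖w^(1)‖, …, w^(m)/‖w^(m)‖) be the blockwise-normalized weights. Then for every index i, ∇_{w^(i)} f(W, g) = (1/‖w^(i)‖) · ∇_{w^(i)} f(V, g), where the right-hand gradient is taken at (V, g). -/

import Mathlib

open MeasureTheory RealInnerProductSpace
open scoped BigOperators

noncomputable section

/-- The space of weight tuples `W = (w⁽¹⁾, …, w⁽ᵐ⁾)` with `w⁽ⁱ⁾ ∈ ℝ^{dᵢ}`. -/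
abbrev Wsp (m : ℕ) (d : Fin m → ℕ) : Type :=
  PiLp 2 fun i : Fin m => EuclideanSpace ℝ (Fin (d i))

/-- The space of extra parameters `g ∈ ℝᵖ`. -/
abbrev Gsp (p : ℕ) : Type := EuclideanSpace ℝ (Fin p)

/-- Blockwise positive rescaling `T_a(W) = (a₁ w⁽¹⁾, …, a_m w⁽ᵐ⁾)`. -/
def rescale {m : ℕ} {d : Fin m → ℕ} (a : Fin m → ℝ) (W : Wsp m d) : Wsp m d :=
  WithLp.toLp 2 fun i => a i • W i

/-- `f` is positively scale-invariant in the weights. -/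
def PSI {m p : ℕ} {d : Fin m → ℕ} (f : Wsp m d → Gsp p → ℝ) : Prop :=
  ∀ a : Fin m → ℝ, (∀ i, 0 < a i) → ∀ W g, f (rescale a W) g = f W g

/-- Partial (Fréchet) gradient of `f` in the `i`-th weight block. -/
def gradW {m p : ℕ} {d : Fin m → ℕ} (f : Wsp m d → Gsp p → ℝ)
    (W : Wsp m d) (g : Gsp p) (i : Fin m) : EuclideanSpace ℝ (Fin (d i)) :=
  gradient (fun v => f (WithLp.toLp 2 (Function.update W.ofLp i v)) g) (W i)


/-- Blockwise normalization `V = (w⁽¹⁾/‖w⁽¹⁾‖, …, w⁽ᵐ⁾/‖w⁽ᵐ⁾‖)`. -/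
def normalizeW {m : ℕ} {d : Fin m → ℕ} (W : Wsp m d) : Wsp m d :=
  WithLp.toLp 2 fun i => ‖W i‖⁻¹ • W i

/-- For a Fréchet-differentiable, positively scale-invariant `f` and
weights with nonzero blocks, `∇_{w⁽ⁱ⁾} f(W, g) = (1/‖w⁽ⁱ⁾‖) • ∇_{w⁽ⁱ⁾} f(V, g)` where
`V` is the blockwise normalization of `W`. -/
theorem stmt1 {m p : ℕ} {d : Fin m → ℕ} (f : Wsp m d → Gsp p → ℝ)
    (hdiff : Differentiable ℝ fun q : Wsp m d × Gsp p => f q.1 q.2)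
    (hPSI : PSI f)
    (W : Wsp m d) (hW : ∀ j, W j ≠ 0) (g : Gsp p) (i : Fin m) :
    gradW f W g i = (1 / ‖W i‖) • gradW f (normalizeW W) g i := by
  have hWi : (0:ℝ) < ‖W i‖ := norm_pos_iff.mpr (hW i)
  set c : ℝ := ‖W i‖⁻¹ with hc
  have hci : 0 < c := inv_pos.mpr hWi
  set h : EuclideanSpace ℝ (Fin (d i)) → ℝ :=
    fun v => f (WithLp.toLp 2 (Function.update W.ofLp i v)) g with hh
  -- differentiability of the update map
  have hupd' : Differentiable ℝ (fun (v : EuclideanSpace ℝ (Fin (d i)))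
      (j : Fin m) => Function.update W i v j) := by
    rw [differentiable_pi]
    intro j
    rcases eq_or_ne j i with rfl | hj
    · simp only [Function.update_self]; exact differentiable_id
    · simp only [Function.update_of_ne hj]
      exact differentiable_const _
  have hupd : Differentiable ℝ (fun v : EuclideanSpace ℝ (Fin (d i)) =>
      ((PiLp.continuousLinearEquiv 2 ℝ
        (fun j : Fin m => EuclideanSpace ℝ (Fin (d j)))).symm
        (fun j => Function.update W i v j) : Wsp m d)) :=
    ((PiLp.continuousLinearEquiv 2 ℝ
      (fun j : Fin m => EuclideanSpace ℝ (Fin (d j)))).symm.differentiable).comp hupd'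
  have hdh : Differentiable ℝ h :=
    by have := hdiff.comp (Differentiable.prodMk hupd (differentiable_const g)); exact this
  -- single-block scale invariance of h
  have hinv : ∀ t : ℝ, 0 < t → ∀ v, h (t • v) = h v := by
    intro t ht v
    have ha : ∀ j : Fin m, 0 < (fun j => if j = i then t else 1) j := by
      intro j; by_cases hj : j = i <;> simp [hj, ht]
    have := hPSI _ ha (WithLp.toLp 2 (Function.update W.ofLp i v)) g
    have hre : rescale (fun j => if j = i then t else 1) (WithLp.toLp 2 (Function.update W.ofLp i v))
        = WithLp.toLp 2 (Function.update W.ofLp i (t • v)) := by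
      apply PiLp.ext; intro j
      rcases eq_or_ne j i with rfl | hj
      · simp [rescale]
      · simp [rescale, Function.update_of_ne hj, hj]
    rw [hre] at this
    exact this
  -- the normalized objective equals h
  have hnorm : (fun v => f (WithLp.toLp 2 (Function.update (normalizeW W).ofLp i v)) g) = h := by
    funext v
    have ha : ∀ j : Fin m, 0 < (fun j => if j = i then 1 else ‖W j‖⁻¹) j := by
      intro j; by_cases hj : j = i <;>
        simp [hj, inv_pos.mpr (norm_pos_iff.mpr (hW j))]
    have := hPSI _ ha (WithLp.toLp 2 (Function.update W.ofLp i v)) g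
    have hre : rescale (fun j => if j = i then 1 else ‖W j‖⁻¹) (WithLp.toLp 2 (Function.update W.ofLp i v))
        = WithLp.toLp 2 (Function.update (normalizeW W).ofLp i v) := by
      apply PiLp.ext; intro j
      rcases eq_or_ne j i with rfl | hj
      · simp [rescale]
      · simp [rescale, Function.update_of_ne hj, hj, normalizeW]
    rw [hre] at this
    exact this
  -- fderiv scaling identity
  have hcomp : (fun v : EuclideanSpace ℝ (Fin (d i)) => h (c • v)) = h :=
    funext (hinv c hci)
  have hfd : fderiv ℝ h (W i) = c • fderiv ℝ h (c • W i) := by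
    have hlin : (fun v : EuclideanSpace ℝ (Fin (d i)) => c • v)
        = ⇑(c • ContinuousLinearMap.id ℝ (EuclideanSpace ℝ (Fin (d i)))) := by
      funext v; simp
    calc fderiv ℝ h (W i) = fderiv ℝ (fun v => h (c • v)) (W i) := by rw [hcomp]
      _ = (fderiv ℝ h (c • W i)).comp
            (fderiv ℝ (fun v : EuclideanSpace ℝ (Fin (d i)) => c • v) (W i)) :=
          fderiv_comp (W i) (hdh _) ((differentiable_id.const_smul c).differentiableAt)
      _ = c • fderiv ℝ h (c • W i) := by
          rw [hlin, ContinuousLinearMap.fderiv]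
          ext u
          simp
  -- conclude via gradient = toDual.symm ∘ fderiv
  have hgrad : gradient h (W i) = c • gradient h (c • W i) := by
    unfold gradient
    rw [hfd, _root_.map_smul]
  have h1 : gradW f W g i = gradient h (W i) := rfl
  have h2 : gradW f (normalizeW W) g i = gradient h (c • W i) := by
    unfold gradW
    rw [hnorm]
    rfl
  rw [h1, h2, hgrad, one_div]

end
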